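/- Derivability of the strongest postcondition: for every program C and outcome assertion φ, the triple ⟨φ⟩C⟨Post(C,φ)⟩ is derivable in the Outcome Logic proof system, i.e. Ω ⊢ ⟨φ⟩C⟨Post(C,φ)⟩, where Post(C,φ) = { ⟦C⟧†(m) | m ∈ φ } is the strongest postcondition of C with respect to φ. -/

import Mathlib

open scoped Classical

universe u v

/-- A semiring that is simultaneously a complete lattice with bottom `0`, whose order
coincides with the natural (additive) order, and in which addition and multiplication
are Scott-continuous. -/
class OLSemiring (U : Type u) extends Semiring U, CompleteLattice U where
  bot_eq_zero : (⊥ : U) = 0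
  le_iff_exists_add : ∀ a b : U, a ≤ b ↔ ∃ c, a + c = b
  add_scott : ∀ (D : Set U), D.Nonempty → DirectedOn (· ≤ ·) D → ∀ y : U,
    sSup ((fun x => x + y) '' D) = sSup D + y
  mul_scott_right : ∀ (D : Set U), D.Nonempty → DirectedOn (· ≤ ·) D → ∀ y : U,
    sSup ((fun x => x * y) '' D) = sSup D * y
  mul_scott_left : ∀ (D : Set U), D.Nonempty → DirectedOn (· ≤ ·) D → ∀ y : U,
    sSup ((fun x => y * x) '' D) = y * sSup D

variable {U : Type u} [OLSemiring U]

/-- Infinite sum: supremum over finite subfamilies of finite sums. -/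
noncomputable def wsum {I : Type v} (f : I → U) : U :=
  ⨆ J : Finset I, ∑ i ∈ J, f i

/-- The unit of the weighting monad. -/
noncomputable def eta {X : Type u} (x : X) : X → U :=
  fun y => if y = x then 1 else 0

/-- Kleisli extension: `kext f m y = ∑_{x ∈ supp m} m x * f x y`. -/
noncomputable def kext {X Y : Type u} (f : X → Y → U) (m : X → U) : Y → U :=
  fun y => wsum (fun x : Function.support m => m x.1 * f x.1 y)

/-- Syntax of tests over primitive tests indexed by `TI`. -/
inductive TestExpr (TI : Type u) : Type u where
  | prim (t : TI)
  | tt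
  | ff
  | and (b₁ b₂ : TestExpr TI)
  | or (b₁ b₂ : TestExpr TI)
  | not (b : TestExpr TI)

/-- The set of states at which a test is true. -/
def testSet {St TI : Type u} (tsem : TI → Set St) : TestExpr TI → Set St
  | .prim t => tsem t
  | .tt => Set.univ
  | .ff => ∅
  | .and b₁ b₂ => testSet tsem b₁ ∩ testSet tsem b₂
  | .or b₁ b₂ => testSet tsem b₁ ∪ testSet tsem b₂
  | .not b => (testSet tsem b)ᶜ

/-- Expressions: a test or a weight. -/
inductive Expr (U : Type u) (TI : Type u) : Type u where
  | test (b : TestExpr TI)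
  | wt (u : U)

/-- Evaluation of expressions into weights. -/
noncomputable def eeval {St TI : Type u} (tsem : TI → Set St) : Expr U TI → St → U
  | .test b => fun σ => if σ ∈ testSet tsem b then 1 else 0
  | .wt u => fun _ => u

/-- Programs. -/
inductive Prog (U St TI Act : Type u) : Type u where
  | skip
  | seq (C₁ C₂ : Prog U St TI Act)
  | choice (C₁ C₂ : Prog U St TI Act)
  | assume (e : Expr U TI)
  | iter (C : Prog U St TI Act) (e e' : Expr U TI)
  | act (a : Act)

/-- The characteristic function of iteration. -/
noncomputable def Phi {St : Type u} (w w' : St → U) (g : St → St → U)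
    (f : St → St → U) : St → St → U :=
  fun σ τ => w σ * kext f (g σ) τ + w' σ * eta σ τ

/-- Denotational semantics of programs. -/
noncomputable def sem {St TI Act : Type u} (tsem : TI → Set St)
    (asem : Act → St → St → U) : Prog U St TI Act → St → St → U
  | .skip => fun σ => eta σ
  | .seq C₁ C₂ => fun σ => kext (sem tsem asem C₂) (sem tsem asem C₁ σ)
  | .choice C₁ C₂ => fun σ τ => sem tsem asem C₁ σ τ + sem tsem asem C₂ σ τ
  | .assume e => fun σ τ => eeval tsem e σ * eta σ τ
  | .iter C e e' =>
      ⨆ n : ℕ, (Phi (eeval tsem e) (eeval tsem e') (sem tsem asem C))^[n] (fun _ _ => 0)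
  | .act a => asem a

/-- Outcome assertions. -/
abbrev OA (U : Type u) (St : Type u) := Set (St → U)

/-- Binary outcome conjunction. -/
def oplus {St : Type u} (φ ψ : OA U St) : OA U St :=
  { m | ∃ m₁ ∈ φ, ∃ m₂ ∈ ψ, m = fun σ => m₁ σ + m₂ σ }

/-- Indexed outcome conjunction. -/
noncomputable def bigOplus {St T : Type u} (φ : T → OA U St) : OA U St :=
  { m | ∃ f : T → St → U, (∀ t, f t ∈ φ t) ∧ m = fun σ => wsum (fun t => f t σ) }

/-- Right scaling of an assertion by a weight. -/
def odotR {St : Type u} (φ : OA U St) (u : U) : OA U St :=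
  { m' | ∃ m ∈ φ, m' = fun σ => m σ * u }

/-- Left scaling of an assertion by a weight. -/
def odotL {St : Type u} (u : U) (φ : OA U St) : OA U St :=
  { m' | ∃ m ∈ φ, m' = fun σ => u * m σ }

/-- `φ ⊨ e = u` : the expression `e` evaluates to `u` on the support of every `m ∈ φ`. -/
def entailsEq {St TI : Type u} (tsem : TI → Set St) (φ : OA U St)
    (e : Expr U TI) (u : U) : Prop :=
  ∀ m ∈ φ, ∀ σ, m σ ≠ 0 → eeval tsem e σ = u

/-- Semantic validity of an outcome triple. -/
def valid {St TI Act : Type u} (tsem : TI → Set St) (asem : Act → St → St → U)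
    (φ : OA U St) (C : Prog U St TI Act) (ψ : OA U St) : Prop :=
  ∀ m ∈ φ, kext (sem tsem asem C) m ∈ ψ

/-- The family `ψ` of assertions converges to `ψlim`. -/
def convergesTo {St : Type u} (ψ : ℕ → OA U St) (ψlim : OA U St) : Prop :=
  ∀ ms : ℕ → St → U, (∀ n, ms n ∈ ψ n) → (fun σ => wsum (fun n => ms n σ)) ∈ ψlim

/-- The Outcome Logic proof system (with oracle axioms for valid atomic triples). -/
inductive Deriv {St TI Act : Type u} (tsem : TI → Set St) (asem : Act → St → St → U) :
    OA U St → Prog U St TI Act → OA U St → Prop where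
  | atom {φ ψ} (a : Act) :
      valid tsem asem φ (.act a) ψ → Deriv tsem asem φ (.act a) ψ
  | skip (φ) : Deriv tsem asem φ .skip φ
  | seq {φ ϑ ψ C₁ C₂} :
      Deriv tsem asem φ C₁ ϑ → Deriv tsem asem ϑ C₂ ψ →
      Deriv tsem asem φ (.seq C₁ C₂) ψ
  | plus {φ ψ₁ ψ₂ C₁ C₂} :
      Deriv tsem asem φ C₁ ψ₁ → Deriv tsem asem φ C₂ ψ₂ →
      Deriv tsem asem φ (.choice C₁ C₂) (oplus ψ₁ ψ₂)
  | assume {φ e u} :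
      entailsEq tsem φ e u → Deriv tsem asem φ (.assume e) (odotR φ u)
  | iter {C e e'} (φn ψn : ℕ → OA U St) (ψlim : OA U St) :
      convergesTo ψn ψlim →
      (∀ n, Deriv tsem asem (φn n) (.seq (.assume e) C) (φn (n + 1))) →
      (∀ n, Deriv tsem asem (φn n) (.assume e') (ψn n)) →
      Deriv tsem asem (φn 0) (.iter C e e') ψlim
  | false (C φ) : Deriv tsem asem ∅ C φ
  | true (C φ) : Deriv tsem asem φ C Set.univ
  | scale {φ ψ C} (u : U) :
      Deriv tsem asem φ C ψ → Deriv tsem asem (odotL u φ) C (odotL u ψ)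
  | disj {φ₁ φ₂ ψ₁ ψ₂ C} :
      Deriv tsem asem φ₁ C ψ₁ → Deriv tsem asem φ₂ C ψ₂ →
      Deriv tsem asem (φ₁ ∪ φ₂) C (ψ₁ ∪ ψ₂)
  | conj {φ₁ φ₂ ψ₁ ψ₂ C} :
      Deriv tsem asem φ₁ C ψ₁ → Deriv tsem asem φ₂ C ψ₂ →
      Deriv tsem asem (φ₁ ∩ φ₂) C (ψ₁ ∩ ψ₂)
  | choice {T : Type u} {C} (φ φ' : T → OA U St) :
      (∀ t, Deriv tsem asem (φ t) C (φ' t)) →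
      Deriv tsem asem (bigOplus φ) C (bigOplus φ')
  | exists_ {T : Type u} {C} (φ φ' : T → OA U St) :
      (∀ t, Deriv tsem asem (φ t) C (φ' t)) →
      Deriv tsem asem (⋃ t, φ t) C (⋃ t, φ' t)
  | conseq {φ φ' ψ ψ' C} :
      φ' ⊆ φ → Deriv tsem asem φ C ψ → ψ ⊆ ψ' →
      Deriv tsem asem φ' C ψ'

/-- The strongest postcondition `Post(C,φ) = { ⟦C⟧†(m) | m ∈ φ }`. -/
def spost {U St TI Act : Type u} [OLSemiring U] (tsem : TI → Set St)
    (asem : Act → St → St → U) (C : Prog U St TI Act) (φ : OA U St) : OA U St :=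
  { m' | ∃ m ∈ φ, m' = kext (sem tsem asem C) m }

/-! ### Auxiliary order-theoretic facts -/

section Aux

variable {U : Type u} [OLSemiring U]

instance OLSemiring.toIsOrderedAddMonoid : IsOrderedAddMonoid U where
  add_le_add_left := by
    intro a b hab c
    obtain ⟨d, hd⟩ := (OLSemiring.le_iff_exists_add a b).1 hab
    exact (OLSemiring.le_iff_exists_add _ _).2 ⟨d, by rw [← hd, add_right_comm]⟩

instance OLSemiring.toCanonicallyOrderedAdd : CanonicallyOrderedAdd U where
  exists_add_of_le := fun h =>
    ((OLSemiring.le_iff_exists_add _ _).1 h).imp fun c hc => hc.symm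
  le_add_self := fun a b => (OLSemiring.le_iff_exists_add _ _).2 ⟨b, add_comm a b⟩
  le_self_add := fun a b => (OLSemiring.le_iff_exists_add _ _).2 ⟨b, rfl⟩

lemma ols_mul_le_mul_right {a b : U} (h : a ≤ b) (c : U) : a * c ≤ b * c := by
  obtain ⟨d, hd⟩ := exists_add_of_le h
  rw [hd, add_mul]; exact le_self_add

lemma ols_mul_le_mul_left {a b : U} (h : a ≤ b) (c : U) : c * a ≤ c * b := by
  obtain ⟨d, hd⟩ := exists_add_of_le h
  rw [hd, mul_add]; exact le_self_add

lemma scott_iSup_add {ι : Sort*} [Nonempty ι] (a : ι → U) (ha : Directed (· ≤ ·) a)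
    (y : U) : (⨆ i, (a i + y)) = (⨆ i, a i) + y := by
  have h := OLSemiring.add_scott (Set.range a) (Set.range_nonempty a)
    (ha.directedOn_range) y
  calc (⨆ i, (a i + y)) = sSup (Set.range ((fun x => x + y) ∘ a)) := rfl
    _ = sSup ((fun x => x + y) '' Set.range a) := by rw [Set.range_comp]
    _ = sSup (Set.range a) + y := h
    _ = (⨆ i, a i) + y := rfl

lemma scott_add_iSup {ι : Sort*} [Nonempty ι] (a : ι → U) (ha : Directed (· ≤ ·) a)
    (y : U) : (⨆ i, (y + a i)) = y + (⨆ i, a i) := by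
  simp only [add_comm y]
  exact scott_iSup_add a ha y

lemma scott_iSup_mul {ι : Sort*} [Nonempty ι] (a : ι → U) (ha : Directed (· ≤ ·) a)
    (y : U) : (⨆ i, (a i * y)) = (⨆ i, a i) * y := by
  have h := OLSemiring.mul_scott_right (Set.range a) (Set.range_nonempty a)
    (ha.directedOn_range) y
  calc (⨆ i, (a i * y)) = sSup (Set.range ((fun x => x * y) ∘ a)) := rfl
    _ = sSup ((fun x => x * y) '' Set.range a) := by rw [Set.range_comp]
    _ = sSup (Set.range a) * y := h
    _ = (⨆ i, a i) * y := rfl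

lemma scott_mul_iSup {ι : Sort*} [Nonempty ι] (a : ι → U) (ha : Directed (· ≤ ·) a)
    (y : U) : (⨆ i, (y * a i)) = y * (⨆ i, a i) := by
  have h := OLSemiring.mul_scott_left (Set.range a) (Set.range_nonempty a)
    (ha.directedOn_range) y
  calc (⨆ i, (y * a i)) = sSup (Set.range ((fun x => y * x) ∘ a)) := rfl
    _ = sSup ((fun x => y * x) '' Set.range a) := by rw [Set.range_comp]
    _ = y * sSup (Set.range a) := h
    _ = y * (⨆ i, a i) := rfl

lemma ols_iSup_add_iSup {ι : Type*} [Nonempty ι] {a b : ι → U}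
    (hd : ∀ i j, ∃ k, a i ≤ a k ∧ a j ≤ a k ∧ b i ≤ b k ∧ b j ≤ b k) :
    (⨆ i, (a i + b i)) = (⨆ i, a i) + (⨆ i, b i) := by
  have hda : Directed (· ≤ ·) a := fun i j => (hd i j).imp fun k h => ⟨h.1, h.2.1⟩
  have hdb : Directed (· ≤ ·) b := fun i j => (hd i j).imp fun k h => ⟨h.2.2.1, h.2.2.2⟩
  apply le_antisymm
  · exact iSup_le fun i => add_le_add (le_iSup a i) (le_iSup b i)
  · rw [← scott_iSup_add a hda]
    refine iSup_le fun i => ?_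
    rw [← scott_add_iSup b hdb]
    refine iSup_le fun j => ?_
    obtain ⟨k, h1, h2, h3, h4⟩ := hd i j
    exact le_trans (add_le_add h1 h4) (le_iSup (fun k => a k + b k) k)

/-! ### `wsum` calculus -/

lemma sum_net_monotone {I : Type v} (f : I → U) :
    Monotone fun J : Finset I => ∑ i ∈ J, f i :=
  fun _ _ h => Finset.sum_le_sum_of_subset h

lemma sum_net_directed {I : Type v} (f : I → U) :
    Directed (· ≤ ·) fun J : Finset I => ∑ i ∈ J, f i :=
  (sum_net_monotone f).directed_le

lemma wsum_le {I : Type v} {f : I → U} {u : U}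
    (h : ∀ J : Finset I, ∑ i ∈ J, f i ≤ u) : wsum f ≤ u := iSup_le h

lemma le_wsum {I : Type v} (f : I → U) (i : I) : f i ≤ wsum f := by
  have := le_iSup (fun J : Finset I => ∑ i ∈ J, f i) {i}
  simp at this; exact this

lemma finsetSum_le_wsum {I : Type v} (f : I → U) (J : Finset I) :
    ∑ i ∈ J, f i ≤ wsum f :=
  le_iSup (fun J : Finset I => ∑ i ∈ J, f i) J

lemma wsum_le_wsum {I : Type v} {f g : I → U} (h : ∀ i, f i ≤ g i) :
    wsum f ≤ wsum g :=
  iSup_mono fun J => Finset.sum_le_sum fun i _ => h i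

lemma wsum_zero {I : Type v} : wsum (fun _ : I => (0 : U)) = 0 := by
  simp [wsum]

lemma wsum_add {I : Type v} (f g : I → U) :
    wsum (fun i => f i + g i) = wsum f + wsum g := by
  have hd : ∀ J K : Finset I, ∃ L,
      (∑ i ∈ J, f i) ≤ (∑ i ∈ L, f i) ∧ (∑ i ∈ K, f i) ≤ (∑ i ∈ L, f i) ∧
      (∑ i ∈ J, g i) ≤ (∑ i ∈ L, g i) ∧ (∑ i ∈ K, g i) ≤ (∑ i ∈ L, g i) := by
    intro J K
    exact ⟨J ∪ K, sum_net_monotone f Finset.subset_union_left,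
      sum_net_monotone f Finset.subset_union_right,
      sum_net_monotone g Finset.subset_union_left,
      sum_net_monotone g Finset.subset_union_right⟩
  calc wsum (fun i => f i + g i)
      = ⨆ J : Finset I, ((∑ i ∈ J, f i) + (∑ i ∈ J, g i)) := by
        unfold wsum; congr 1; funext J; rw [Finset.sum_add_distrib]
    _ = wsum f + wsum g := ols_iSup_add_iSup hd

lemma wsum_mul {I : Type v} (f : I → U) (u : U) :
    wsum (fun i => f i * u) = wsum f * u := by
  calc wsum (fun i => f i * u)
      = ⨆ J : Finset I, (∑ i ∈ J, f i) * u := by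
        unfold wsum; congr 1; funext J; rw [Finset.sum_mul]
    _ = wsum f * u := scott_iSup_mul _ (sum_net_directed f) u

lemma mul_wsum {I : Type v} (f : I → U) (u : U) :
    wsum (fun i => u * f i) = u * wsum f := by
  calc wsum (fun i => u * f i)
      = ⨆ J : Finset I, u * (∑ i ∈ J, f i) := by
        unfold wsum; congr 1; funext J; rw [Finset.mul_sum]
    _ = u * wsum f := scott_mul_iSup _ (sum_net_directed f) u

lemma wsum_single {I : Type v} (f : I → U) (i₀ : I) (h : ∀ i, i ≠ i₀ → f i = 0) :
    wsum f = f i₀ := by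
  classical
  apply le_antisymm
  · apply wsum_le; intro J
    calc ∑ i ∈ J, f i ≤ ∑ i ∈ insert i₀ J, f i :=
          Finset.sum_le_sum_of_subset (Finset.subset_insert _ _)
      _ = f i₀ := Finset.sum_eq_single_of_mem i₀ (Finset.mem_insert_self _ _)
          (fun b _ hb => h b hb)
  · exact le_wsum f i₀

lemma wsum_fintype {I : Type v} [Fintype I] (f : I → U) : wsum f = ∑ i, f i :=
  le_antisymm
    (wsum_le fun J => Finset.sum_le_sum_of_subset (Finset.subset_univ J))
    (finsetSum_le_wsum f Finset.univ)

lemma wsum_nat (c : ℕ → U) : wsum c = ⨆ n, ∑ k ∈ Finset.range n, c k := by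
  apply le_antisymm
  · apply wsum_le; intro J
    refine le_trans (Finset.sum_le_sum_of_subset (fun i hi => ?_))
      (le_iSup (fun n => ∑ k ∈ Finset.range n, c k) (J.sup id + 1))
    rw [Finset.mem_range]
    exact Nat.lt_succ_of_le (Finset.le_sup (f := id) hi)
  · exact iSup_le fun n => finsetSum_le_wsum c (Finset.range n)

lemma wsum_extend {I : Type v} {J : Type*} (e : I → J) (he : Function.Injective e)
    (f : J → U) (hf : ∀ j, (∀ i, e i ≠ j) → f j = 0) :
    wsum (fun i => f (e i)) = wsum f := by
  classical
  apply le_antisymm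
  · apply wsum_le; intro A
    calc ∑ i ∈ A, f (e i) = ∑ j ∈ A.image e, f j :=
          (Finset.sum_image (fun a _ b _ h => he h)).symm
      _ ≤ wsum f := finsetSum_le_wsum f _
  · apply wsum_le; intro B
    have hB : ∑ j ∈ B, f j = ∑ i ∈ B.preimage e he.injOn, f (e i) :=
      (Finset.sum_preimage e B he.injOn f
        (fun x _ hx => hf x (fun i hi => hx ⟨i, hi⟩))).symm
    rw [hB]
    exact finsetSum_le_wsum (fun i => f (e i)) _

lemma wsum_equiv {I : Type v} {J : Type*} (e : I ≃ J) (f : J → U) :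
    wsum (fun i => f (e i)) = wsum f :=
  wsum_extend e e.injective f (fun j hj => absurd (e.apply_symm_apply j) (hj (e.symm j)))

lemma finsetSum_wsum {K : Type v} {J : Type v} (A : Finset K) (h : K → J → U) :
    ∑ x ∈ A, wsum (h x) = ⨆ B : Finset J, ∑ x ∈ A, ∑ j ∈ B, h x j := by
  classical
  induction A using Finset.induction_on with
  | empty => simp
  | @insert a s ha ih =>
    have hd : ∀ B C : Finset J, ∃ L,
        (∑ j ∈ B, h a j) ≤ (∑ j ∈ L, h a j) ∧ (∑ j ∈ C, h a j) ≤ (∑ j ∈ L, h a j) ∧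
        (∑ x ∈ s, ∑ j ∈ B, h x j) ≤ (∑ x ∈ s, ∑ j ∈ L, h x j) ∧
        (∑ x ∈ s, ∑ j ∈ C, h x j) ≤ (∑ x ∈ s, ∑ j ∈ L, h x j) := by
      intro B C
      refine ⟨B ∪ C, sum_net_monotone _ Finset.subset_union_left,
        sum_net_monotone _ Finset.subset_union_right,
        Finset.sum_le_sum fun x _ => sum_net_monotone _ Finset.subset_union_left,
        Finset.sum_le_sum fun x _ => sum_net_monotone _ Finset.subset_union_right⟩
    rw [Finset.sum_insert ha, ih]
    calc wsum (h a) + ⨆ B : Finset J, ∑ x ∈ s, ∑ j ∈ B, h x j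
        = (⨆ B : Finset J, ∑ j ∈ B, h a j)
            + ⨆ B : Finset J, ∑ x ∈ s, ∑ j ∈ B, h x j := rfl
      _ = ⨆ B : Finset J, ((∑ j ∈ B, h a j) + ∑ x ∈ s, ∑ j ∈ B, h x j) :=
          (ols_iSup_add_iSup hd).symm
      _ = ⨆ B : Finset J, ∑ x ∈ insert a s, ∑ j ∈ B, h x j := by
          congr 1; funext B; rw [Finset.sum_insert ha]

lemma wsum_wsum {I : Type v} {J : Type v} (h : I → J → U) :
    wsum (fun i => wsum (h i)) = wsum (fun p : I × J => h p.1 p.2) := by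
  classical
  apply le_antisymm
  · apply wsum_le; intro A
    rw [finsetSum_wsum]
    refine iSup_le fun B => ?_
    calc ∑ i ∈ A, ∑ j ∈ B, h i j = ∑ p ∈ A ×ˢ B, h p.1 p.2 :=
          (Finset.sum_product A B (fun p : I × J => h p.1 p.2)).symm
      _ ≤ wsum (fun p : I × J => h p.1 p.2) := finsetSum_le_wsum _ _
  · apply wsum_le; intro P
    calc ∑ p ∈ P, h p.1 p.2
        ≤ ∑ p ∈ P.image Prod.fst ×ˢ P.image Prod.snd, h p.1 p.2 :=
          Finset.sum_le_sum_of_subset (fun p hp => Finset.mem_product.2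
            ⟨Finset.mem_image_of_mem _ hp, Finset.mem_image_of_mem _ hp⟩)
      _ = ∑ i ∈ P.image Prod.fst, ∑ j ∈ P.image Prod.snd, h i j :=
          Finset.sum_product _ _ (fun p : I × J => h p.1 p.2)
      _ ≤ ∑ i ∈ P.image Prod.fst, wsum (h i) :=
          Finset.sum_le_sum fun i _ => finsetSum_le_wsum (h i) _
      _ ≤ wsum (fun i => wsum (h i)) := finsetSum_le_wsum _ _

lemma wsum_comm {I : Type v} {J : Type v} (h : I → J → U) :
    wsum (fun i => wsum (fun j => h i j)) = wsum (fun j => wsum (fun i => h i j)) := by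
  rw [wsum_wsum, wsum_wsum]
  exact (wsum_equiv (Equiv.prodComm J I) (fun p : I × J => h p.1 p.2)).symm

lemma finsetSum_iSup {K : Type v} {ι : Type*} [Nonempty ι] (A : Finset K)
    (h : ι → K → U) (hd : ∀ i j, ∃ k, (∀ x, h i x ≤ h k x) ∧ (∀ x, h j x ≤ h k x)) :
    ∑ x ∈ A, (⨆ n, h n x) = ⨆ n, ∑ x ∈ A, h n x := by
  classical
  induction A using Finset.induction_on with
  | empty => simp
  | @insert a s ha ih =>
    have hd' : ∀ i j : ι, ∃ k, h i a ≤ h k a ∧ h j a ≤ h k a ∧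
        (∑ x ∈ s, h i x) ≤ (∑ x ∈ s, h k x) ∧ (∑ x ∈ s, h j x) ≤ (∑ x ∈ s, h k x) := by
      intro i j
      obtain ⟨k, h1, h2⟩ := hd i j
      exact ⟨k, h1 a, h2 a, Finset.sum_le_sum fun x _ => h1 x,
        Finset.sum_le_sum fun x _ => h2 x⟩
    rw [Finset.sum_insert ha, ih]
    calc (⨆ n, h n a) + (⨆ n, ∑ x ∈ s, h n x)
        = ⨆ n, (h n a + ∑ x ∈ s, h n x) := (ols_iSup_add_iSup hd').symm
      _ = ⨆ n, ∑ x ∈ insert a s, h n x := by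
          congr 1; funext n; rw [Finset.sum_insert ha]

lemma wsum_iSup {I : Type v} {ι : Type*} [Nonempty ι] (h : ι → I → U)
    (hd : ∀ i j, ∃ k, (∀ x, h i x ≤ h k x) ∧ (∀ x, h j x ≤ h k x)) :
    wsum (fun x => ⨆ n, h n x) = ⨆ n, wsum (h n) := by
  calc wsum (fun x => ⨆ n, h n x)
      = ⨆ J : Finset I, ⨆ n, ∑ x ∈ J, h n x := by
        unfold wsum; congr 1; funext J; exact finsetSum_iSup J h hd
    _ = ⨆ n, ⨆ J : Finset I, ∑ x ∈ J, h n x := iSup_comm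
    _ = ⨆ n, wsum (h n) := rfl

/-! ### `kext` calculus -/

lemma kext_eq {X Y : Type u} (f : X → Y → U) (m : X → U) (y : Y) :
    kext f m y = wsum (fun x : X => m x * f x y) := by
  refine wsum_extend (Subtype.val : Function.support m → X) Subtype.val_injective
    (fun x => m x * f x y) (fun x hx => ?_)
  by_cases hm : m x = 0
  · show m x * f x y = 0
    rw [hm, zero_mul]
  · exact absurd rfl (hx ⟨x, hm⟩)

lemma kext_eta {X : Type u} (m : X → U) : kext (fun x => eta x) m = m := by
  funext y
  rw [kext_eq]
  rw [wsum_single _ y (fun i hiy => by simp [eta, Ne.symm hiy])]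
  simp [eta]

lemma kext_assoc {X Y Z : Type u} (g : Y → Z → U) (f : X → Y → U) (m : X → U) :
    kext g (kext f m) = kext (fun x => kext g (f x)) m := by
  funext z
  rw [kext_eq, kext_eq]
  calc wsum (fun y => kext f m y * g y z)
      = wsum (fun y => wsum (fun x => (m x * f x y) * g y z)) := by
        congr 1; funext y; rw [kext_eq, wsum_mul]
    _ = wsum (fun x => wsum (fun y => (m x * f x y) * g y z)) := wsum_comm _
    _ = wsum (fun x => m x * kext g (f x) z) := by
        congr 1; funext x
        rw [kext_eq (f := g) (m := f x)]
        rw [← mul_wsum]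
        congr 1; funext y; rw [mul_assoc]

lemma kext_mono {X Y : Type u} {f f' : X → Y → U} (h : ∀ x y, f x y ≤ f' x y)
    (m : X → U) (y : Y) : kext f m y ≤ kext f' m y := by
  rw [kext_eq, kext_eq]
  exact wsum_le_wsum fun x => ols_mul_le_mul_left (h x y) (m x)

end Aux

/-! ### Program-level lemmas -/

section Progs

variable {U St TI Act : Type u} [OLSemiring U]
variable (tsem : TI → Set St) (asem : Act → St → St → U)

lemma kext_sem_skip (m : St → U) : kext (sem tsem asem .skip) m = m := by
  have : sem tsem asem (.skip : Prog U St TI Act) = fun σ => eta σ := by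
    simp [sem]
  rw [this]
  exact kext_eta m

lemma kext_sem_seq (C₁ C₂ : Prog U St TI Act) (m : St → U) :
    kext (sem tsem asem (.seq C₁ C₂)) m
      = kext (sem tsem asem C₂) (kext (sem tsem asem C₁) m) := by
  have : sem tsem asem (.seq C₁ C₂)
      = fun σ => kext (sem tsem asem C₂) (sem tsem asem C₁ σ) := by simp [sem]
  rw [this, kext_assoc]

lemma kext_sem_choice (C₁ C₂ : Prog U St TI Act) (m : St → U) (τ : St) :
    kext (sem tsem asem (.choice C₁ C₂)) m τ
      = kext (sem tsem asem C₁) m τ + kext (sem tsem asem C₂) m τ := by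
  rw [kext_eq, kext_eq, kext_eq, ← wsum_add]
  congr 1; funext x
  have : sem tsem asem (.choice C₁ C₂) x τ
      = sem tsem asem C₁ x τ + sem tsem asem C₂ x τ := by simp [sem]
  rw [this, mul_add]

lemma kext_sem_assume (e : Expr U TI) (m : St → U) :
    kext (sem tsem asem (.assume e) : St → St → U) m
      = fun τ => m τ * eeval tsem e τ := by
  funext τ
  rw [kext_eq]
  rw [wsum_single _ τ (fun i hiτ => ?_)]
  · simp [sem, eta]
  · have : sem tsem asem (.assume e : Prog U St TI Act) i τ = 0 := by
      simp [sem, eta, Ne.symm hiτ]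
    rw [this, mul_zero]

/-- One unrolling step of the loop body on weighting functions. -/
noncomputable def olStep (C : Prog U St TI Act) (e : Expr U TI) (m : St → U) :
    St → U :=
  kext (sem tsem asem C) (fun σ => m σ * eeval tsem e σ)

lemma kext_phi (C : Prog U St TI Act) (e e' : Expr U TI) (f : St → St → U)
    (m : St → U) (τ : St) :
    kext (Phi (eeval tsem e) (eeval tsem e') (sem tsem asem C) f) m τ
      = kext f (olStep tsem asem C e m) τ + m τ * eeval tsem e' τ := by
  set W : St → U := eeval tsem e
  set W' : St → U := eeval tsem e'
  set g : St → St → U := sem tsem asem C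
  rw [kext_eq]
  have hsplit : (fun x => m x * Phi W W' g f x τ)
      = fun x => (m x * (W x * kext f (g x) τ)) + (m x * (W' x * eta x τ)) := by
    funext x; rw [Phi, mul_add]
  rw [hsplit, wsum_add]
  congr 1
  · calc wsum (fun x => m x * (W x * kext f (g x) τ))
        = wsum (fun x => (m x * W x) * kext f (g x) τ) := by
          congr 1; funext x; rw [mul_assoc]
      _ = kext (fun x => kext f (g x)) (fun σ => m σ * W σ) τ := (kext_eq _ _ τ).symm
      _ = kext f (kext g (fun σ => m σ * W σ)) τ := by rw [kext_assoc]
      _ = kext f (olStep tsem asem C e m) τ := rfl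
  · rw [wsum_single _ τ (fun i hiτ => ?_)]
    · simp [eta]
    · simp [eta, Ne.symm hiτ]

lemma phi_iterate_mono (C : Prog U St TI Act) (e e' : Expr U TI) :
    ∀ n x τ, (Phi (eeval tsem e) (eeval tsem e') (sem tsem asem C))^[n]
        (fun _ _ => (0 : U)) x τ
      ≤ (Phi (eeval tsem e) (eeval tsem e') (sem tsem asem C))^[n + 1]
        (fun _ _ => (0 : U)) x τ := by
  set W : St → U := eeval tsem e
  set W' : St → U := eeval tsem e'
  set g : St → St → U := sem tsem asem C
  have phimono : ∀ f f' : St → St → U, (∀ x τ, f x τ ≤ f' x τ) →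
      ∀ x τ, Phi W W' g f x τ ≤ Phi W W' g f' x τ := by
    intro f f' h x τ
    unfold Phi
    exact add_le_add (ols_mul_le_mul_left (kext_mono h (g x) τ) (W x)) le_rfl
  intro n
  induction n with
  | zero => intro x τ; simp
  | succ n ih =>
    intro x τ
    rw [Function.iterate_succ_apply', Function.iterate_succ_apply']
    exact phimono _ _ ih x τ

lemma kext_phi_iterate (C : Prog U St TI Act) (e e' : Expr U TI) :
    ∀ (n : ℕ) (m : St → U) (τ : St),
      kext ((Phi (eeval tsem e) (eeval tsem e') (sem tsem asem C))^[n]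
        (fun _ _ => (0 : U))) m τ
      = ∑ k ∈ Finset.range n, ((olStep tsem asem C e)^[k] m) τ * eeval tsem e' τ := by
  intro n
  induction n with
  | zero =>
    intro m τ
    rw [Function.iterate_zero_apply, kext_eq]
    have : (fun x => m x * (fun _ _ => (0 : U)) x τ) = fun _ : St => (0 : U) := by
      funext x; exact mul_zero _
    rw [this, wsum_zero, Finset.sum_range_zero]
  | succ n ih =>
    intro m τ
    rw [Function.iterate_succ_apply', kext_phi, ih]
    rw [Finset.sum_range_succ']
    simp only [Function.iterate_succ_apply, Function.iterate_zero_apply]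

lemma kext_sem_iter (C : Prog U St TI Act) (e e' : Expr U TI) (m : St → U) (τ : St) :
    kext (sem tsem asem (.iter C e e')) m τ
      = wsum (fun n : ℕ => ((olStep tsem asem C e)^[n] m) τ * eeval tsem e' τ) := by
  set W : St → U := eeval tsem e
  set W' : St → U := eeval tsem e'
  set g : St → St → U := sem tsem asem C
  set F : ℕ → St → St → U :=
    fun n => (Phi W W' g)^[n] (fun _ _ => (0 : U)) with hF
  have hmono : ∀ x τ', Monotone fun n => F n x τ' := by
    intro x τ'
    exact monotone_nat_of_le_succ fun n => phi_iterate_mono tsem asem C e e' n x τ'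
  have hsem : sem tsem asem (.iter C e e') = ⨆ n, F n := by simp [sem, hF]; rfl
  rw [hsem, kext_eq]
  have happ : ∀ x, (⨆ n, F n) x τ = ⨆ n, F n x τ := by
    intro x; rw [iSup_apply, iSup_apply]
  calc wsum (fun x => m x * (⨆ n, F n) x τ)
      = wsum (fun x => ⨆ n, m x * F n x τ) := by
        congr 1; funext x
        rw [happ x, scott_mul_iSup _ ((hmono x τ).directed_le) (m x)]
    _ = ⨆ n, wsum (fun x => m x * F n x τ) := by
        refine wsum_iSup _ fun i j => ⟨max i j, fun x => ?_, fun x => ?_⟩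
        · exact ols_mul_le_mul_left (hmono x τ (le_max_left i j)) (m x)
        · exact ols_mul_le_mul_left (hmono x τ (le_max_right i j)) (m x)
    _ = ⨆ n, kext (F n) m τ := by
        congr 1; funext n; rw [kext_eq]
    _ = ⨆ n, ∑ k ∈ Finset.range n, ((olStep tsem asem C e)^[k] m) τ * W' τ := by
        congr 1; funext n; exact kext_phi_iterate tsem asem C e e' n m τ
    _ = wsum (fun n : ℕ => ((olStep tsem asem C e)^[n] m) τ * W' τ) :=
        (wsum_nat _).symm

lemma wsum_ulift_bool (g : ULift.{u} Bool → U) :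
    wsum g = g ⟨true⟩ + g ⟨false⟩ := by
  rw [wsum_fintype, ← Equiv.sum_comp (Equiv.ulift.symm : Bool ≃ ULift Bool) g,
    Fintype.sum_bool]
  rfl

lemma deriv_assume (e : Expr U TI) (m : St → U) :
    Deriv tsem asem {m} (.assume e) {fun σ => m σ * eeval tsem e σ} := by
  classical
  cases e with
  | wt u =>
    refine Deriv.conseq le_rfl
      (Deriv.assume (u := u) (fun m' _ σ _ => rfl)) ?_
    rintro x ⟨m₀, hm₀, rfl⟩
    rw [Set.mem_singleton_iff.1 hm₀]
    rfl
  | test b =>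
    set m₁ : St → U := fun σ => if σ ∈ testSet tsem b then m σ else 0 with hm₁
    set m₂ : St → U := fun σ => if σ ∈ testSet tsem b then 0 else m σ with hm₂
    have d₁ : Deriv tsem asem {m₁} (.assume (.test b)) (odotR {m₁} 1) := by
      refine Deriv.assume (fun m' hm' σ hσ => ?_)
      rw [Set.mem_singleton_iff.1 hm'] at hσ
      have : σ ∈ testSet tsem b := by
        by_contra hσ'
        exact hσ (by simp [hm₁, hσ'])
      simp [eeval, this]
    have d₂ : Deriv tsem asem {m₂} (.assume (.test b)) (odotR {m₂} 0) := by
      refine Deriv.assume (fun m' hm' σ hσ => ?_)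
      rw [Set.mem_singleton_iff.1 hm'] at hσ
      have : σ ∉ testSet tsem b := by
        intro hσ'
        exact hσ (by simp [hm₂, hσ'])
      simp [eeval, this]
    have dc := Deriv.choice (T := ULift.{u} Bool)
      (fun t => if t.down then {m₁} else {m₂})
      (fun t => if t.down then odotR {m₁} 1 else odotR {m₂} 0)
      (fun t => by
        rcases t with ⟨_ | _⟩
        · simpa using d₂
        · simpa using d₁)
    refine Deriv.conseq ?_ dc ?_
    · rintro x hx
      rw [Set.mem_singleton_iff.1 hx]
      refine ⟨fun t => if t.down then m₁ else m₂, fun t => by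
        rcases t with ⟨_ | _⟩ <;> simp, ?_⟩
      funext σ
      rw [wsum_ulift_bool]
      by_cases hσ : σ ∈ testSet tsem b <;> simp [hm₁, hm₂, hσ]
    · rintro x ⟨f, hf, rfl⟩
      have h₁ := hf ⟨true⟩
      have h₂ := hf ⟨false⟩
      simp only [if_pos, if_neg] at h₁ h₂
      obtain ⟨n₁, hn₁, he₁⟩ := h₁
      obtain ⟨n₂, hn₂, he₂⟩ := h₂
      rw [Set.mem_singleton_iff.1 hn₁] at he₁
      rw [Set.mem_singleton_iff.1 hn₂] at he₂
      rw [Set.mem_singleton_iff]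
      funext σ
      rw [wsum_ulift_bool, he₁, he₂]
      by_cases hσ : σ ∈ testSet tsem b <;> simp [hm₁, hm₂, eeval, hσ]

lemma deriv_singleton (C : Prog U St TI Act) (m : St → U) :
    Deriv tsem asem {m} C {kext (sem tsem asem C) m} := by
  induction C generalizing m with
  | skip =>
    refine Deriv.conseq le_rfl (Deriv.skip {m}) ?_
    intro x hx
    rw [Set.mem_singleton_iff.1 hx, Set.mem_singleton_iff, kext_sem_skip]
  | seq C₁ C₂ ih₁ ih₂ =>
    refine Deriv.conseq le_rfl (Deriv.seq (ih₁ m) (ih₂ _)) ?_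
    intro x hx
    rw [Set.mem_singleton_iff.1 hx, Set.mem_singleton_iff, kext_sem_seq]
  | choice C₁ C₂ ih₁ ih₂ =>
    refine Deriv.conseq le_rfl (Deriv.plus (ih₁ m) (ih₂ m)) ?_
    rintro x ⟨a, ha, b, hb, rfl⟩
    rw [Set.mem_singleton_iff.1 ha, Set.mem_singleton_iff.1 hb]
    rw [Set.mem_singleton_iff]
    funext τ
    rw [kext_sem_choice]
  | assume e =>
    refine Deriv.conseq le_rfl (deriv_assume tsem asem e m) ?_
    intro x hx
    rw [Set.mem_singleton_iff.1 hx, Set.mem_singleton_iff, kext_sem_assume]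
  | iter C e e' ih =>
    set step : (St → U) → (St → U) := olStep tsem asem C e with hstep
    set φn : ℕ → OA U St := fun n => {step^[n] m} with hφn
    set ψn : ℕ → OA U St := fun n =>
      {fun σ => (step^[n] m) σ * eeval tsem e' σ} with hψn
    have h1 : ∀ n, Deriv tsem asem (φn n) (.seq (.assume e) C) (φn (n + 1)) := by
      intro n
      refine Deriv.seq (deriv_assume tsem asem e (step^[n] m))
        (Deriv.conseq le_rfl (ih (fun σ => (step^[n] m) σ * eeval tsem e σ)) ?_)
      intro x hx
      rw [Set.mem_singleton_iff.1 hx, hφn, Set.mem_singleton_iff,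
        Function.iterate_succ_apply']
      rfl
    have h2 : ∀ n, Deriv tsem asem (φn n) (.assume e') (ψn n) :=
      fun n => deriv_assume tsem asem e' (step^[n] m)
    have h3 : convergesTo ψn {kext (sem tsem asem (.iter C e e')) m} := by
      intro ms hms
      have hms' : ∀ n, ms n = fun σ => (step^[n] m) σ * eeval tsem e' σ :=
        fun n => Set.mem_singleton_iff.1 (hms n)
      rw [Set.mem_singleton_iff]
      funext τ
      rw [kext_sem_iter]
      congr 1
      funext n
      rw [hms' n]
    have := Deriv.iter φn ψn _ h3 h1 h2
    refine Deriv.conseq ?_ this le_rfl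
    intro x hx
    rw [Set.mem_singleton_iff.1 hx, hφn, Set.mem_singleton_iff,
      Function.iterate_zero_apply]
  | act a =>
    refine Deriv.atom a (fun m' hm' => ?_)
    rw [Set.mem_singleton_iff.1 hm']
    rfl

end Progs

/-- **Derivability of the strongest postcondition**: `Ω ⊢ ⟨φ⟩C⟨Post(C,φ)⟩`. -/
theorem spost_derivable {U St TI Act : Type u} [OLSemiring U]
    (tsem : TI → Set St) (asem : Act → St → St → U)
    (C : Prog U St TI Act) (φ : OA U St) :
    Deriv tsem asem φ C (spost tsem asem C φ) := by
  refine Deriv.conseq (φ := ⋃ p : ↥φ, ({(p : St → U)} : OA U St))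
    (ψ := ⋃ p : ↥φ, ({kext (sem tsem asem C) p} : OA U St))
    (fun x hx => Set.mem_iUnion.2 ⟨⟨x, hx⟩, rfl⟩)
    (Deriv.exists_ _ _ (fun p => deriv_singleton tsem asem C p))
    (fun x hx => ?_)
  obtain ⟨p, hp⟩ := Set.mem_iUnion.1 hx
  exact ⟨p, p.2, hp⟩
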